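/- Let C ≥ 2 and let μ_1,…,μ_C ∈ ℝ^d form a regular simplex with side K > 0, i.e. ‖μ_c − μ_{c′}‖ = K for all c ≠ c′. Let 0 ≤ ε < K/2 and suppose x ∈ ℝ^d satisfies ‖x − μ_{c*}‖ ≤ ε for some index c*. Set γ = ε·√(2C/(K²(C−1))). Then ((C−1)K⁴/C²)·(1−γ)² ≤ Var_c[‖x − μ_c‖²] ≤ ((C−1)K⁴/C²)·(1+γ)² + 2ε²K²(C−2)/C. -/

import Mathlib

open scoped RealInnerProductSpace
open Finset

lemma key_sum_sq {d C : ℕ} {K : ℝ} {μ : Fin C → EuclideanSpace ℝ (Fin d)}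
    (hsimplex : ∀ c c', c ≠ c' → ‖μ c - μ c'‖ = K)
    (δ : EuclideanSpace ℝ (Fin d)) (w : Fin C → ℝ) (hw : ∑ c, w c = 0)
    (hws : ∑ c, w c * ⟪μ c, δ⟫ = ∑ c, (w c)^2) :
    ∑ c, (w c)^2 ≤ K^2 / 2 * ‖δ‖^2 := by
  set y : EuclideanSpace ℝ (Fin d) := ∑ c, w c • μ c with hy
  have h1 : ⟪y, δ⟫ = ∑ c, (w c)^2 := by
    rw [hy, sum_inner]
    simp_rw [real_inner_smul_left]
    exact hws
  have hgram : ∀ c c', ⟪μ c, μ c'⟫ = (‖μ c‖^2 + ‖μ c'‖^2 - (if c = c' then 0 else K^2))/2 := by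
    intro c c'
    by_cases h : c = c'
    · subst h
      rw [real_inner_self_eq_norm_sq, if_pos rfl]
      ring
    · have hK2 : ‖μ c - μ c'‖^2 = K^2 := by rw [hsimplex c c' h]
      rw [norm_sub_sq_real] at hK2
      simp only [h, if_false]
      linarith
  have h2 : ⟪y, y⟫ = K^2/2 * ∑ c, (w c)^2 := by
    have hyy : ⟪y, y⟫ = ∑ c, ∑ c', w c * (w c' * ((‖μ c‖^2 + ‖μ c'‖^2 - (if c = c' then 0 else K^2))/2)) := by
      rw [hy, sum_inner]
      refine Finset.sum_congr rfl fun c _ => ?_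
      rw [real_inner_smul_left, inner_sum, Finset.mul_sum]
      refine Finset.sum_congr rfl fun c' _ => ?_
      rw [real_inner_smul_right, hgram]
    rw [hyy]
    have hinner : ∀ c : Fin C, ∑ c', w c * (w c' * ((‖μ c‖^2 + ‖μ c'‖^2 - (if c = c' then 0 else K^2))/2))
        = w c * ((∑ c', w c' * ‖μ c'‖^2)/2) + K^2/2 * (w c)^2 := by
      intro c
      have e1 : ∀ c' : Fin C, w c * (w c' * ((‖μ c‖^2 + ‖μ c'‖^2 - (if c = c' then 0 else K^2))/2))
          = (w c * ‖μ c‖^2/2 - w c * K^2/2) * w c' + w c * (w c' * ‖μ c'‖^2)/2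
            + (if c' = c then w c * w c' * K^2/2 else 0) := by
        intro c'
        by_cases h : c = c'
        · subst h; simp; ring
        · simp [h, Ne.symm h]; ring
      rw [Finset.sum_congr rfl fun c' _ => e1 c']
      rw [Finset.sum_add_distrib, Finset.sum_add_distrib, Finset.sum_ite_eq' univ c (fun c' => w c * w c' * K^2/2)]
      simp only [Finset.mem_univ, if_true]
      rw [← Finset.mul_sum, hw]
      have : ∑ c', w c * (w c' * ‖μ c'‖^2)/2 = w c * ((∑ c', w c' * ‖μ c'‖^2)/2) := by
        rw [← Finset.sum_div, ← Finset.mul_sum, mul_div_assoc]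
      rw [this]
      ring
    rw [Finset.sum_congr rfl fun c _ => hinner c, Finset.sum_add_distrib, ← Finset.sum_mul, hw, ← Finset.mul_sum]
    ring
  have hcs := real_inner_mul_inner_self_le y δ
  rw [h1, h2, real_inner_self_eq_norm_sq] at hcs
  have hS : 0 ≤ ∑ c, (w c)^2 := Finset.sum_nonneg fun c _ => sq_nonneg _
  rcases eq_or_lt_of_le hS with h | h
  · rw [← h]; positivity
  · nlinarith [sq_nonneg ‖δ‖]

/-- Variance of a finite family of reals indexed by `Fin C`. -/
noncomputable def varFam {C : ℕ} (a : Fin C → ℝ) : ℝ :=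
  (1 / (C : ℝ)) * ∑ c, (a c - (1 / (C : ℝ)) * ∑ c', a c') ^ 2

set_option maxHeartbeats 1600000 in
theorem id_classwise_variance_bounds {d C : ℕ} (hC : 2 ≤ C) (K ε : ℝ) (hK : 0 < K)
    (μ : Fin C → EuclideanSpace ℝ (Fin d))
    (hsimplex : ∀ c c', c ≠ c' → ‖μ c - μ c'‖ = K)
    (hε0 : 0 ≤ ε) (hε : ε < K / 2)
    (x : EuclideanSpace ℝ (Fin d)) (cstar : Fin C)
    (hx : ‖x - μ cstar‖ ≤ ε)
    (γ : ℝ) (hγ : γ = ε * Real.sqrt (2 * C / (K ^ 2 * ((C : ℝ) - 1)))) :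
    (((C : ℝ) - 1) * K ^ 4 / (C : ℝ) ^ 2) * (1 - γ) ^ 2
      ≤ varFam (fun c => ‖x - μ c‖ ^ 2) ∧
    varFam (fun c => ‖x - μ c‖ ^ 2)
      ≤ (((C : ℝ) - 1) * K ^ 4 / (C : ℝ) ^ 2) * (1 + γ) ^ 2
        + 2 * ε ^ 2 * K ^ 2 * ((C : ℝ) - 2) / (C : ℝ) := by
  have hC2 : (2:ℝ) ≤ (C:ℝ) := by exact_mod_cast hC
  have hC0 : (0:ℝ) < (C:ℝ) := by linarith
  have hC1 : (0:ℝ) < (C:ℝ) - 1 := by linarith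
  have hCne : (C:ℝ) ≠ 0 := ne_of_gt hC0
  set δ : EuclideanSpace ℝ (Fin d) := x - μ cstar with hδdef
  have hδ : ‖δ‖ ≤ ε := hx
  have hδ2 : ‖δ‖^2 ≤ ε^2 := by
    have := norm_nonneg δ
    nlinarith
  set s : Fin C → ℝ := fun c => ⟪μ c, δ⟫ with hs
  set sbar : ℝ := (1/(C:ℝ)) * ∑ c, s c with hsbar
  set w : Fin C → ℝ := fun c => s c - sbar with hwdef
  have hw : ∑ c, w c = 0 := by
    simp only [hwdef, Finset.sum_sub_distrib, Finset.sum_const, card_univ, Fintype.card_fin,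
      nsmul_eq_mul, hsbar]
    field_simp
    ring
  have hws : ∑ c, w c * ⟪μ c, δ⟫ = ∑ c, (w c)^2 := by
    have e : ∀ c : Fin C, w c * ⟪μ c, δ⟫ = (w c)^2 + sbar * w c := by
      intro c
      simp only [hwdef, hs]
      ring
    rw [Finset.sum_congr rfl fun c _ => e c, Finset.sum_add_distrib, ← Finset.mul_sum, hw]
    ring
  have hkey : ∑ c, (w c)^2 ≤ K^2/2 * ε^2 := by
    have h1 := key_sum_sq hsimplex δ w hw hws
    have h2 : K^2/2 * ‖δ‖^2 ≤ K^2/2 * ε^2 := by nlinarith [sq_nonneg K]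
    linarith
  -- expansion of squared distances
  have ha : ∀ c : Fin C, ‖x - μ c‖^2 = ‖δ‖^2 + 2*s cstar - 2*s c + (if c = cstar then 0 else K^2) := by
    intro c
    by_cases h : c = cstar
    · subst h
      simp [hδdef]
    · have hxc : x - μ c = δ - (μ c - μ cstar) := by
        simp only [hδdef]
        abel
      have hv : ‖μ c - μ cstar‖^2 = K^2 := by rw [hsimplex c cstar h]
      have hiv : ⟪δ, μ c - μ cstar⟫ = s c - s cstar := by
        rw [inner_sub_right]
        simp only [hs]
        rw [real_inner_comm δ (μ c), real_inner_comm δ (μ cstar)]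
      rw [hxc, norm_sub_sq_real, hiv, hv]
      simp only [h, if_false]
      ring
  set p : Fin C → ℝ := fun c => (if c = cstar then -(K^2*((C:ℝ)-1)/C) else K^2/C) with hpdef
  set q : Fin C → ℝ := fun c => -2 * w c with hqdef
  -- the mean
  have hsums : ∑ c : Fin C, (if c = cstar then (0:ℝ) else K^2) = K^2 * ((C:ℝ)-1) := by
    have e : ∀ c : Fin C, (if c = cstar then (0:ℝ) else K^2) = K^2 - (if c = cstar then K^2 else 0) := by
      intro c; by_cases h : c = cstar <;> simp [h]
    rw [Finset.sum_congr rfl fun c _ => e c, Finset.sum_sub_distrib,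
      Finset.sum_ite_eq' univ cstar (fun _ => K^2)]
    simp [mul_comm]
    ring
  have hmean : (1/(C:ℝ)) * ∑ c, ‖x - μ c‖^2 = ‖δ‖^2 + 2*s cstar - 2*sbar + K^2*((C:ℝ)-1)/C := by
    rw [Finset.sum_congr rfl fun c _ => ha c]
    simp only [Finset.sum_add_distrib, Finset.sum_sub_distrib, Finset.sum_const, card_univ,
      Fintype.card_fin, nsmul_eq_mul, hsums, ← Finset.mul_sum]
    rw [hsbar]
    field_simp
  have hcenter : ∀ c : Fin C, ‖x - μ c‖^2 - (1/(C:ℝ)) * ∑ c', ‖x - μ c'‖^2 = p c + q c := by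
    intro c
    rw [ha c, hmean]
    simp only [hpdef, hqdef, hwdef]
    by_cases h : c = cstar <;> simp only [h, if_pos, if_neg, not_false_iff] <;> field_simp <;> ring
  -- Euclidean vectors over Fin C
  obtain ⟨P, hP⟩ : ∃ P : EuclideanSpace ℝ (Fin C), ∀ c, P c = p c := ⟨WithLp.toLp 2 p, fun _ => rfl⟩
  obtain ⟨Q, hQ⟩ : ∃ Q : EuclideanSpace ℝ (Fin C), ∀ c, Q c = q c := ⟨WithLp.toLp 2 q, fun _ => rfl⟩
  have hnormsq : ∀ v : EuclideanSpace ℝ (Fin C), ‖v‖^2 = ∑ c, (v c)^2 := by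
    intro v
    rw [← real_inner_self_eq_norm_sq, PiLp.inner_apply]
    refine Finset.sum_congr rfl fun c _ => ?_
    simp [RCLike.inner_apply, sq]
  have hP2 : ‖P‖^2 = K^4*((C:ℝ)-1)/C := by
    rw [hnormsq]
    have e : ∀ c : Fin C, (P c)^2 = (K^2/C)^2 + (if c = cstar then (K^2*((C:ℝ)-1)/C)^2 - (K^2/C)^2 else 0) := by
      intro c
      rw [hP]
      simp only [hpdef]
      by_cases h : c = cstar <;> simp only [h, if_pos, if_neg, not_false_iff] <;> ring
    rw [Finset.sum_congr rfl fun c _ => e c, Finset.sum_add_distrib,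
      Finset.sum_ite_eq' univ cstar (fun _ => (K^2*((C:ℝ)-1)/C)^2 - (K^2/C)^2)]
    simp only [Finset.mem_univ, if_true, Finset.sum_const, card_univ, Fintype.card_fin,
      nsmul_eq_mul]
    field_simp
    ring
  have hQ2 : ‖Q‖^2 = 4 * ∑ c, (w c)^2 := by
    rw [hnormsq]
    rw [Finset.mul_sum]
    refine Finset.sum_congr rfl fun c _ => ?_
    rw [hQ]
    simp only [hqdef]
    ring
  -- gamma facts
  have hz : (0:ℝ) ≤ 2 * C / (K ^ 2 * ((C : ℝ) - 1)) := by positivity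
  have hγ0 : 0 ≤ γ := by
    rw [hγ]
    positivity
  have hγsq : γ^2 = ε^2 * (2 * C / (K ^ 2 * ((C : ℝ) - 1))) := by
    rw [hγ, mul_pow, Real.sq_sqrt hz]
  have hγ1 : γ ≤ 1 := by
    have hε2 : ε^2 ≤ K^2/4 := by nlinarith
    have h1 : γ^2 ≤ 1 := by
      rw [hγsq]
      rw [mul_div_assoc']
      rw [div_le_one (by positivity)]
      nlinarith [mul_le_mul_of_nonneg_right hε2 hC0.le, sq_nonneg K]
    nlinarith
  have hγP : ‖Q‖^2 ≤ γ^2 * ‖P‖^2 := by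
    rw [hQ2, hP2, hγsq]
    have e : ε^2 * (2 * C / (K ^ 2 * ((C : ℝ) - 1))) * (K^4*((C:ℝ)-1)/C) = 2 * K^2 * ε^2 := by
      field_simp
    rw [e]
    linarith
  have hQP : ‖Q‖ ≤ γ * ‖P‖ := by
    have h1 : ‖Q‖^2 ≤ (γ * ‖P‖)^2 := by rw [mul_pow]; exact hγP
    have h2 : (0:ℝ) ≤ γ * ‖P‖ := by positivity
    nlinarith [norm_nonneg Q]
  -- variance identity
  have hvar : varFam (fun c => ‖x - μ c‖^2) = (1/(C:ℝ)) * ‖P + Q‖^2 := by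
    rw [varFam, hnormsq]
    congr 1
    refine Finset.sum_congr rfl fun c _ => ?_
    rw [PiLp.add_apply, hP, hQ, ← hcenter c]
  have htriu : ‖P + Q‖ ≤ ‖P‖ + ‖Q‖ := norm_add_le P Q
  have htril : ‖P‖ - ‖Q‖ ≤ ‖P + Q‖ := by
    have := norm_add_le (P + Q) (-Q)
    simp only [add_neg_cancel_right, norm_neg] at this
    linarith
  have hPn : 0 ≤ ‖P‖ := norm_nonneg P
  have hlow1 : ‖P‖ * (1 - γ) ≤ ‖P + Q‖ := by
    have : ‖P‖ * (1 - γ) ≤ ‖P‖ - ‖Q‖ := by nlinarith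
    linarith
  have hlow0 : 0 ≤ ‖P‖ * (1 - γ) := by
    have : 0 ≤ 1 - γ := by linarith
    positivity
  have hlowsq : (‖P‖ * (1 - γ))^2 ≤ ‖P + Q‖^2 := by
    exact pow_le_pow_left₀ hlow0 hlow1 2
  have hupsq : ‖P + Q‖^2 ≤ (‖P‖ * (1 + γ))^2 := by
    have h1 : ‖P + Q‖ ≤ ‖P‖ * (1 + γ) := by nlinarith [norm_nonneg Q, norm_nonneg (P+Q)]
    exact pow_le_pow_left₀ (norm_nonneg _) h1 2
  constructor
  · rw [hvar]
    have e : (1/(C:ℝ)) * (‖P‖ * (1 - γ))^2 = (((C : ℝ) - 1) * K ^ 4 / (C : ℝ) ^ 2) * (1 - γ) ^ 2 := by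
      rw [mul_pow, hP2]
      field_simp
    rw [← e]
    have : (1/(C:ℝ)) * (‖P‖ * (1 - γ))^2 ≤ (1/(C:ℝ)) * ‖P + Q‖^2 := by
      apply mul_le_mul_of_nonneg_left hlowsq
      positivity
    linarith
  · rw [hvar]
    have e : (1/(C:ℝ)) * (‖P‖ * (1 + γ))^2 = (((C : ℝ) - 1) * K ^ 4 / (C : ℝ) ^ 2) * (1 + γ) ^ 2 := by
      rw [mul_pow, hP2]
      field_simp
    have h1 : (1/(C:ℝ)) * ‖P + Q‖^2 ≤ (1/(C:ℝ)) * (‖P‖ * (1 + γ))^2 := by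
      apply mul_le_mul_of_nonneg_left hupsq
      positivity
    have h2 : 0 ≤ 2 * ε ^ 2 * K ^ 2 * ((C : ℝ) - 2) / (C : ℝ) := by
      have : (0:ℝ) ≤ (C:ℝ) - 2 := by linarith
      positivity
    linarith [e ▸ h1]
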